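/- Let G : Ω × Ω → [0,∞] be measurable with G(x,y) ≤ W(x-y) for all x,y ∈ Ω, where W ≥ 0 on ℝ^N, W ∈ L^r(ℝ^N) with r > N/2, and W = 0 outside Ω. Set q = 2r/(2r-1). Then there exists C_G > 0 such that for all u, v, w ∈ L^{2q}(Ω), |∫_Ω (∫_Ω G(x,y) v(y)² dy) u(x) w(x) dx| ≤ C_G ‖v‖²_{L^{2q}(Ω)} ‖u‖_{L^{2q}(Ω)} ‖w‖_{L^{2q}(Ω)}. -/

import Mathlib

open MeasureTheory Real Filter
open scoped ENNReal


private lemma alg3 (a b c : ℝ≥0∞) {r q p0 p2 : ℝ}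
    (hp0 : 0 ≤ p0) (hp2 : 0 ≤ p2) (h1 : 0 ≤ r * p0) (h2 : 0 ≤ q * p0) (h3 : 0 ≤ q * p2)
    (hA : r * p0 + r * p0 = 1) (hB : q * p0 + q * p2 = 1) :
    a * b * c = (a ^ r * b ^ q) ^ p0 * ((a ^ r * c ^ q) ^ p0 * (b ^ q * c ^ q) ^ p2) := by
  have ha : a ^ (r * p0) * a ^ (r * p0) = a := by
    rw [← ENNReal.rpow_add_of_nonneg _ _ h1 h1, hA, ENNReal.rpow_one]
  have hb : b ^ (q * p0) * b ^ (q * p2) = b := by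
    rw [← ENNReal.rpow_add_of_nonneg _ _ h2 h3, hB, ENNReal.rpow_one]
  have hc : c ^ (q * p0) * c ^ (q * p2) = c := by
    rw [← ENNReal.rpow_add_of_nonneg _ _ h2 h3, hB, ENNReal.rpow_one]
  rw [ENNReal.mul_rpow_of_nonneg _ _ hp0, ENNReal.mul_rpow_of_nonneg _ _ hp0,
      ENNReal.mul_rpow_of_nonneg _ _ hp2]
  simp only [← ENNReal.rpow_mul]
  calc a * b * c
      = (a ^ (r * p0) * a ^ (r * p0)) * ((b ^ (q * p0) * b ^ (q * p2))
          * (c ^ (q * p0) * c ^ (q * p2))) := by rw [ha, hb, hc]; ring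
    _ = a ^ (r * p0) * b ^ (q * p0) * (a ^ (r * p0) * c ^ (q * p0)
          * (b ^ (q * p2) * c ^ (q * p2))) := by ring

private lemma alg3' (A B C : ℝ≥0∞) {p0 p2 : ℝ} (hp0 : 0 ≤ p0) (hp2 : 0 ≤ p2) :
    (A * B) ^ p0 * ((A * C) ^ p0 * (B * C) ^ p2)
      = A ^ (p0 + p0) * (B ^ (p0 + p2) * C ^ (p0 + p2)) := by
  rw [ENNReal.mul_rpow_of_nonneg _ _ hp0, ENNReal.mul_rpow_of_nonneg _ _ hp0,
      ENNReal.mul_rpow_of_nonneg _ _ hp2, ENNReal.rpow_add_of_nonneg _ _ hp0 hp0,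
      ENNReal.rpow_add_of_nonneg _ _ hp0 hp2, ENNReal.rpow_add_of_nonneg _ _ hp0 hp2]
  ring

/-- For a measurable `G : Ω × Ω → [0,∞)` with `G(x,y) ≤ W(x-y)`, where `W ≥ 0`,
`W ∈ L^r(ℝ^N)` with `r > N/2`, `W = 0` outside `Ω`, and `q = 2r/(2r-1)`, there is `C_G > 0`
with `|∫_Ω ⟨G,v²⟩ u w| ≤ C_G ‖v‖²_{L^{2q}(Ω)} ‖u‖_{L^{2q}(Ω)} ‖w‖_{L^{2q}(Ω)}`. -/
theorem stmt7 {N : ℕ} (hN : 2 ≤ N) (Ω : Set (Fin N → ℝ)) (hΩ : Bornology.IsBounded Ω)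
    (hΩm : MeasurableSet Ω)
    (G : (Fin N → ℝ) → (Fin N → ℝ) → ℝ) (W : (Fin N → ℝ) → ℝ) (r q : ℝ)
    (hrN : (N : ℝ) / 2 < r) (hq : q = 2 * r / (2 * r - 1))
    (hGm : Measurable (Function.uncurry G)) (hG0 : ∀ x y, 0 ≤ G x y)
    (hGW : ∀ x ∈ Ω, ∀ y ∈ Ω, G x y ≤ W (x - y))
    (hW0 : ∀ x, 0 ≤ W x) (hWm : Measurable W)
    (hWr : Integrable (fun x => W x ^ r))
    (hWout : ∀ z, z ∉ Ω → W z = 0) :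
    ∃ C > (0:ℝ), ∀ u v w : (Fin N → ℝ) → ℝ,
      Measurable u → Measurable v → Measurable w →
      IntegrableOn (fun x => |u x| ^ (2 * q)) Ω →
      IntegrableOn (fun x => |v x| ^ (2 * q)) Ω →
      IntegrableOn (fun x => |w x| ^ (2 * q)) Ω →
      |∫ x in Ω, (∫ y in Ω, G x y * (v y) ^ 2) * (u x * w x)| ≤
        C * ((∫ x in Ω, |v x| ^ (2 * q)) ^ (1 / (2 * q))) ^ 2
          * (∫ x in Ω, |u x| ^ (2 * q)) ^ (1 / (2 * q))
          * (∫ x in Ω, |w x| ^ (2 * q)) ^ (1 / (2 * q)) := by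
  -- numeric facts
  have hN2 : (2:ℝ) ≤ (N:ℝ) := by exact_mod_cast hN
  have hr1 : (1:ℝ) < r := by nlinarith
  have hr0 : (0:ℝ) < r := by linarith
  have h2r : (0:ℝ) < 2 * r - 1 := by linarith
  have hq0 : 0 < q := by rw [hq]; positivity
  set p0 : ℝ := 1 / (2 * r) with hp0def
  set p2 : ℝ := 1 - 1 / r with hp2def
  have hp0 : 0 ≤ p0 := by positivity
  have hp2 : 0 ≤ p2 := by
    have : 1 / r ≤ 1 := by rw [div_le_one hr0]; linarith
    simp only [hp2def]; linarith
  have hA : r * p0 + r * p0 = 1 := by rw [hp0def]; field_simp; ring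
  have hsum : p0 + (p0 + p2) = 1 := by rw [hp0def, hp2def]; ring
  have h2p0 : p0 + p0 = 1 / r := by rw [hp0def]; ring
  have hp0p2 : p0 + p2 = 1 / q := by
    have h1q : 1 / q = (2 * r - 1) / (2 * r) := by rw [hq, one_div_div]
    rw [h1q, hp0def, hp2def]
    field_simp
    ring
  have hB : q * p0 + q * p2 = 1 := by
    rw [← mul_add, hp0p2, mul_one_div, div_self hq0.ne']
  -- the weight in ℝ≥0∞
  set Wp : (Fin N → ℝ) → ℝ≥0∞ := fun z => ENNReal.ofReal (W z) with hWpdef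
  have mWp : Measurable Wp := hWm.ennreal_ofReal
  set IW : ℝ≥0∞ := ∫⁻ z, Wp z ^ r with hIWdef
  have hIWtop : IW ≠ ⊤ := by
    have h1 : IW = ∫⁻ z, ENNReal.ofReal (W z ^ r) := by
      refine lintegral_congr fun z => ?_
      exact ENNReal.ofReal_rpow_of_nonneg (hW0 z) hr0.le
    rw [h1]
    exact ((hasFiniteIntegral_iff_ofReal
      (Eventually.of_forall fun z => rpow_nonneg (hW0 z) r)).mp hWr.hasFiniteIntegral).ne
  refine ⟨IW.toReal ^ (1 / r) + 1, by positivity, ?_⟩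
  intro u v w hu hv hw hiu hiv hiw
  set μΩ := volume.restrict Ω with hμΩ
  set au : (Fin N → ℝ) → ℝ≥0∞ := fun x => ENNReal.ofReal |u x| with haus
  set aw : (Fin N → ℝ) → ℝ≥0∞ := fun x => ENNReal.ofReal |w x| with haws
  set fv : (Fin N → ℝ) → ℝ≥0∞ := fun y => ENNReal.ofReal (v y ^ 2) with hfvs
  set gu : (Fin N → ℝ) → ℝ≥0∞ := fun x => au x * aw x with hgus
  have mau : Measurable au := hu.abs.ennreal_ofReal
  have maw : Measurable aw := hw.abs.ennreal_ofReal
  have mfv : Measurable fv := (hv.pow_const 2).ennreal_ofReal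
  have mgu : Measurable gu := mau.mul maw
  have hfvq : ∀ y, fv y ^ q = ENNReal.ofReal (|v y| ^ (2 * q)) := by
    intro y
    rw [hfvs]
    rw [ENNReal.ofReal_rpow_of_nonneg (sq_nonneg _) hq0.le]
    congr 1
    rw [← sq_abs, ← Real.rpow_natCast |v y| 2, ← Real.rpow_mul (abs_nonneg _)]
    norm_num
  -- the three lintegrals
  set Iu : ℝ≥0∞ := ∫⁻ x in Ω, ENNReal.ofReal (|u x| ^ (2 * q)) with hIu
  set Iw : ℝ≥0∞ := ∫⁻ x in Ω, ENNReal.ofReal (|w x| ^ (2 * q)) with hIw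
  set Iv : ℝ≥0∞ := ∫⁻ y in Ω, ENNReal.ofReal (|v y| ^ (2 * q)) with hIv
  have habs_nonneg : ∀ f : (Fin N → ℝ) → ℝ, (0:(Fin N → ℝ) → ℝ) ≤ᵐ[μΩ] fun x => |f x| ^ (2*q) :=
    fun f => Eventually.of_forall fun x => rpow_nonneg (abs_nonneg _) _
  have hIutop : Iu ≠ ⊤ :=
    ((hasFiniteIntegral_iff_ofReal (habs_nonneg u)).mp hiu.hasFiniteIntegral).ne
  have hIwtop : Iw ≠ ⊤ :=
    ((hasFiniteIntegral_iff_ofReal (habs_nonneg w)).mp hiw.hasFiniteIntegral).ne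
  have hIvtop : Iv ≠ ⊤ :=
    ((hasFiniteIntegral_iff_ofReal (habs_nonneg v)).mp hiv.hasFiniteIntegral).ne
  have hRu : (∫ x in Ω, |u x| ^ (2 * q)) = Iu.toReal := by
    rw [integral_eq_lintegral_of_nonneg_ae (habs_nonneg u)
      (hu.abs.pow_const (2*q)).aestronglyMeasurable]
  have hRw : (∫ x in Ω, |w x| ^ (2 * q)) = Iw.toReal := by
    rw [integral_eq_lintegral_of_nonneg_ae (habs_nonneg w)
      (hw.abs.pow_const (2*q)).aestronglyMeasurable]
  have hRv : (∫ x in Ω, |v x| ^ (2 * q)) = Iv.toReal := by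
    rw [integral_eq_lintegral_of_nonneg_ae (habs_nonneg v)
      (hv.abs.pow_const (2*q)).aestronglyMeasurable]
  -- inner integral representation
  set L : (Fin N → ℝ) → ℝ≥0∞ := fun x => ∫⁻ y in Ω, ENNReal.ofReal (G x y) * fv y with hLdef
  have hinner : ∀ x, (∫ y in Ω, G x y * v y ^ 2) = (L x).toReal := by
    intro x
    rw [integral_eq_lintegral_of_nonneg_ae
      (Eventually.of_forall fun y => mul_nonneg (hG0 x y) (sq_nonneg _))
      ((hGm.of_uncurry_left.mul (hv.pow_const 2)).aestronglyMeasurable)]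
    congr 1
    refine lintegral_congr fun y => ?_
    rw [ENNReal.ofReal_mul (hG0 x y)]
  -- product-space setup
  set Pm := μΩ.prod μΩ with hPm
  set F : (Fin N → ℝ) × (Fin N → ℝ) → ℝ≥0∞ :=
    fun z => Wp (z.1 - z.2) * fv z.2 * gu z.1 with hF
  have mWsub : Measurable fun z : (Fin N → ℝ) × (Fin N → ℝ) => Wp (z.1 - z.2) :=
    mWp.comp (measurable_fst.sub measurable_snd)
  have mF : Measurable F := (mWsub.mul (mfv.comp measurable_snd)).mul (mgu.comp measurable_fst)
  set f0 : (Fin N → ℝ) × (Fin N → ℝ) → ℝ≥0∞ :=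
    fun z => Wp (z.1 - z.2) ^ r * fv z.2 ^ q with hf0
  set f1 : (Fin N → ℝ) × (Fin N → ℝ) → ℝ≥0∞ :=
    fun z => Wp (z.1 - z.2) ^ r * gu z.1 ^ q with hf1
  set f2 : (Fin N → ℝ) × (Fin N → ℝ) → ℝ≥0∞ :=
    fun z => fv z.2 ^ q * gu z.1 ^ q with hf2
  have mf0 : Measurable f0 := (mWsub.pow_const r).mul ((mfv.comp measurable_snd).pow_const q)
  have mf1 : Measurable f1 := (mWsub.pow_const r).mul ((mgu.comp measurable_fst).pow_const q)
  have mf2 : Measurable f2 :=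
    ((mfv.comp measurable_snd).pow_const q).mul ((mgu.comp measurable_fst).pow_const q)
  have hrp0 : 0 ≤ r * p0 := by linarith [hA]
  have hqp0 : 0 ≤ q * p0 := mul_nonneg hq0.le hp0
  have hqp2 : 0 ≤ q * p2 := mul_nonneg hq0.le hp2
  -- Hölder with three factors
  have holder : ∫⁻ z, F z ∂Pm ≤
      (∫⁻ z, f0 z ∂Pm) ^ p0 * ((∫⁻ z, f1 z ∂Pm) ^ p0 * (∫⁻ z, f2 z ∂Pm) ^ p2) := by
    have hmeas : ∀ i ∈ Finset.univ, AEMeasurable (![f0, f1, f2] i) Pm := by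
      intro i _
      fin_cases i
      · exact mf0.aemeasurable
      · exact mf1.aemeasurable
      · exact mf2.aemeasurable
    have hpsum : ∑ i, ![p0, p0, p2] i = 1 := by
      simp only [Fin.sum_univ_three, Matrix.cons_val_zero, Matrix.cons_val_one, Matrix.head_cons,
        Matrix.cons_val_two, Matrix.tail_cons]
      linarith [hsum]
    have hpnn : ∀ i ∈ Finset.univ, 0 ≤ ![p0, p0, p2] i := by
      intro i _
      fin_cases i
      · exact hp0
      · exact hp0
      · exact hp2
    have h := ENNReal.lintegral_prod_norm_pow_le (μ := Pm) Finset.univ hmeas hpsum hpnn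
    simp only [Fin.prod_univ_three, Matrix.cons_val_zero, Matrix.cons_val_one, Matrix.head_cons,
      Matrix.cons_val_two, Matrix.tail_cons] at h
    calc ∫⁻ z, F z ∂Pm = ∫⁻ z, f0 z ^ p0 * (f1 z ^ p0 * f2 z ^ p2) ∂Pm := by
          refine lintegral_congr fun z => ?_
          simp only [hF, hf0, hf1, hf2]
          exact alg3 _ _ _ hp0 hp2 hrp0 hqp0 hqp2 hA hB
      _ ≤ _ := by
          simpa only [mul_assoc] using h
  -- translation invariance bounds
  have hIWy : ∀ y, (∫⁻ x in Ω, Wp (x - y) ^ r) ≤ IW := by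
    intro y
    refine le_trans (setLIntegral_le_lintegral _ _) (le_of_eq ?_)
    exact (measurePreserving_sub_right volume y).lintegral_comp (mWp.pow_const r)
  have hIWx : ∀ x, (∫⁻ y in Ω, Wp (x - y) ^ r) ≤ IW := by
    intro x
    refine le_trans (setLIntegral_le_lintegral _ _) (le_of_eq ?_)
    exact (Measure.measurePreserving_sub_left volume x).lintegral_comp (mWp.pow_const r)
  set Ig : ℝ≥0∞ := ∫⁻ x in Ω, gu x ^ q with hIg
  have hIvfv : (∫⁻ y in Ω, fv y ^ q) = Iv := by
    rw [hIv]; exact lintegral_congr hfvq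
  -- bound the three integrals
  have hI0 : (∫⁻ z, f0 z ∂Pm) ≤ IW * Iv := by
    rw [hPm, lintegral_prod_symm _ mf0.aemeasurable]
    calc (∫⁻ y in Ω, ∫⁻ x in Ω, f0 (x, y))
        = ∫⁻ y in Ω, (∫⁻ x in Ω, Wp (x - y) ^ r) * fv y ^ q := by
          refine lintegral_congr fun y => ?_
          simp only [hf0]
          exact lintegral_mul_const _ ((mWp.comp (measurable_id.sub measurable_const)).pow_const r)
      _ ≤ ∫⁻ y in Ω, IW * fv y ^ q :=
          lintegral_mono fun y => mul_le_mul_left (hIWy y) _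
      _ = IW * ∫⁻ y in Ω, fv y ^ q := lintegral_const_mul'' _ ((mfv.pow_const q).aemeasurable)
      _ = IW * Iv := by rw [hIvfv]
  have hI1 : (∫⁻ z, f1 z ∂Pm) ≤ IW * Ig := by
    rw [hPm, lintegral_prod _ mf1.aemeasurable]
    calc (∫⁻ x in Ω, ∫⁻ y in Ω, f1 (x, y))
        = ∫⁻ x in Ω, (∫⁻ y in Ω, Wp (x - y) ^ r) * gu x ^ q := by
          refine lintegral_congr fun x => ?_
          simp only [hf1]
          exact lintegral_mul_const _ ((mWp.comp (measurable_const.sub measurable_id)).pow_const r)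
      _ ≤ ∫⁻ x in Ω, IW * gu x ^ q :=
          lintegral_mono fun x => mul_le_mul_left (hIWx x) _
      _ = IW * ∫⁻ x in Ω, gu x ^ q := lintegral_const_mul'' _ ((mgu.pow_const q).aemeasurable)
      _ = IW * Ig := by rw [hIg]
  have hI2 : (∫⁻ z, f2 z ∂Pm) = Iv * Ig := by
    rw [hPm]
    calc (∫⁻ z, f2 z ∂(μΩ.prod μΩ))
        = ∫⁻ z, gu z.1 ^ q * fv z.2 ^ q ∂(μΩ.prod μΩ) :=
          lintegral_congr fun z => by simp only [hf2]; rw [mul_comm]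
      _ = (∫⁻ x in Ω, gu x ^ q) * ∫⁻ y in Ω, fv y ^ q :=
          lintegral_prod_mul ((mgu.pow_const q).aemeasurable) ((mfv.pow_const q).aemeasurable)
      _ = Iv * Ig := by rw [hIvfv, ← hIg, mul_comm]
  -- Cauchy-Schwarz for gu
  have hIg_le : Ig ≤ Iu ^ (1/2 : ℝ) * Iw ^ (1/2 : ℝ) := by
    have hconj : Real.HolderConjugate 2 2 := Real.HolderConjugate.two_two
    have h := ENNReal.lintegral_mul_le_Lp_mul_Lq μΩ hconj
      ((mau.pow_const q).aemeasurable) ((maw.pow_const q).aemeasurable)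
    have e1 : (∫⁻ x in Ω, (au x ^ q) ^ (2:ℝ)) = Iu := by
      rw [hIu]
      refine lintegral_congr fun x => ?_
      rw [← ENNReal.rpow_mul, mul_comm q 2, haus,
        ENNReal.ofReal_rpow_of_nonneg (abs_nonneg _) (by positivity)]
    have e2 : (∫⁻ x in Ω, (aw x ^ q) ^ (2:ℝ)) = Iw := by
      rw [hIw]
      refine lintegral_congr fun x => ?_
      rw [← ENNReal.rpow_mul, mul_comm q 2, haws,
        ENNReal.ofReal_rpow_of_nonneg (abs_nonneg _) (by positivity)]
    calc Ig = ∫⁻ x in Ω, au x ^ q * aw x ^ q := by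
          rw [hIg]
          exact lintegral_congr fun x => by
            simp only [hgus]; exact ENNReal.mul_rpow_of_nonneg _ _ hq0.le
      _ ≤ (∫⁻ x in Ω, (au x ^ q) ^ (2:ℝ)) ^ (1/2 : ℝ)
            * (∫⁻ x in Ω, (aw x ^ q) ^ (2:ℝ)) ^ (1/2 : ℝ) := h
      _ = Iu ^ (1/2 : ℝ) * Iw ^ (1/2 : ℝ) := by rw [e1, e2]
  have hIgq : Ig ^ (1/q) ≤ Iu ^ (1/(2*q)) * Iw ^ (1/(2*q)) := by
    have hhalf : (1/2 : ℝ) * (1/q) = 1/(2*q) := one_div_mul_one_div 2 q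
    calc Ig ^ (1/q) ≤ (Iu ^ (1/2 : ℝ) * Iw ^ (1/2 : ℝ)) ^ (1/q) :=
          ENNReal.rpow_le_rpow hIg_le (by positivity)
      _ = Iu ^ (1/(2*q)) * Iw ^ (1/(2*q)) := by
          rw [ENNReal.mul_rpow_of_nonneg _ _ (by positivity), ← ENNReal.rpow_mul,
            ← ENNReal.rpow_mul, hhalf]
  -- the full ENNReal bound
  set RHSE : ℝ≥0∞ := IW ^ (1/r) * (Iv ^ (1/q) * (Iu ^ (1/(2*q)) * Iw ^ (1/(2*q)))) with hRHSE
  have hcore : ∫⁻ z, F z ∂Pm ≤ RHSE := by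
    calc ∫⁻ z, F z ∂Pm
        ≤ (∫⁻ z, f0 z ∂Pm) ^ p0 * ((∫⁻ z, f1 z ∂Pm) ^ p0 * (∫⁻ z, f2 z ∂Pm) ^ p2) := holder
      _ ≤ (IW * Iv) ^ p0 * ((IW * Ig) ^ p0 * (Iv * Ig) ^ p2) := by
          gcongr
          exact le_of_eq hI2
      _ = IW ^ (p0 + p0) * (Iv ^ (p0 + p2) * Ig ^ (p0 + p2)) := alg3' _ _ _ hp0 hp2
      _ = IW ^ (1/r) * (Iv ^ (1/q) * Ig ^ (1/q)) := by rw [h2p0, hp0p2]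
      _ ≤ RHSE := by
          rw [hRHSE]
          exact mul_le_mul_right (mul_le_mul_right hIgq _) _
  have hRHSEtop : RHSE ≠ ⊤ := by
    rw [hRHSE]
    exact ENNReal.mul_ne_top (ENNReal.rpow_ne_top_of_nonneg (by positivity) hIWtop)
      (ENNReal.mul_ne_top (ENNReal.rpow_ne_top_of_nonneg (by positivity) hIvtop)
        (ENNReal.mul_ne_top (ENNReal.rpow_ne_top_of_nonneg (by positivity) hIutop)
          (ENNReal.rpow_ne_top_of_nonneg (by positivity) hIwtop)))
  -- main estimate
  have hmain : |∫ x in Ω, (∫ y in Ω, G x y * v y ^ 2) * (u x * w x)| ≤ RHSE.toReal := by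
    have heq : (∫ x in Ω, (∫ y in Ω, G x y * v y ^ 2) * (u x * w x))
        = ∫ x in Ω, (L x).toReal * (u x * w x) := by
      refine integral_congr_ae (Eventually.of_forall fun x => ?_)
      show (∫ y in Ω, G x y * v y ^ 2) * (u x * w x) = (L x).toReal * (u x * w x)
      rw [hinner x]
    rw [heq]
    calc |∫ x in Ω, (L x).toReal * (u x * w x)|
        = ‖∫ x in Ω, (L x).toReal * (u x * w x)‖ := (Real.norm_eq_abs _).symm
      _ ≤ (∫⁻ x in Ω, ENNReal.ofReal ‖(L x).toReal * (u x * w x)‖).toReal :=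
          norm_integral_le_lintegral_norm _
      _ ≤ RHSE.toReal := by
          refine ENNReal.toReal_mono hRHSEtop ?_
          calc (∫⁻ x in Ω, ENNReal.ofReal ‖(L x).toReal * (u x * w x)‖)
              ≤ ∫⁻ x in Ω, L x * gu x := by
                refine lintegral_mono fun x => ?_
                rw [Real.norm_eq_abs, abs_mul, abs_of_nonneg ENNReal.toReal_nonneg, abs_mul,
                  ENNReal.ofReal_mul ENNReal.toReal_nonneg,
                  ENNReal.ofReal_mul (abs_nonneg _)]
                exact mul_le_mul_left ENNReal.ofReal_toReal_le _
            _ ≤ ∫⁻ x in Ω, (∫⁻ y in Ω, Wp (x - y) * fv y) * gu x := by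
                refine lintegral_mono_ae ?_
                filter_upwards [ae_restrict_mem hΩm] with x hx
                refine mul_le_mul_left ?_ _
                rw [hLdef]
                refine lintegral_mono_ae ?_
                filter_upwards [ae_restrict_mem hΩm] with y hy
                exact mul_le_mul_left (ENNReal.ofReal_le_ofReal (hGW x hx y hy)) _
            _ = ∫⁻ x in Ω, ∫⁻ y in Ω, Wp (x - y) * fv y * gu x := by
                refine lintegral_congr fun x => ?_
                exact (lintegral_mul_const'' _
                  (((mWp.comp (measurable_const.sub measurable_id)).mul mfv).aemeasurable)).symm
            _ = ∫⁻ z, F z ∂Pm := by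
                rw [hPm]
                exact (lintegral_prod _ mF.aemeasurable).symm
            _ ≤ RHSE := hcore
  -- conclude
  rw [hRu, hRv, hRw]
  refine le_trans hmain ?_
  have hRHSEr : RHSE.toReal
      = IW.toReal ^ (1/r) * (Iv.toReal ^ (1/q) * (Iu.toReal ^ (1/(2*q)) * Iw.toReal ^ (1/(2*q)))) := by
    rw [hRHSE, ENNReal.toReal_mul, ENNReal.toReal_mul, ENNReal.toReal_mul,
      ENNReal.toReal_rpow, ENNReal.toReal_rpow, ENNReal.toReal_rpow, ENNReal.toReal_rpow]
  rw [hRHSEr]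
  have hv2 : (Iv.toReal ^ (1/(2*q))) ^ (2:ℕ) = Iv.toReal ^ (1/q) := by
    rw [← Real.rpow_natCast (Iv.toReal ^ (1/(2*q))) 2, ← Real.rpow_mul ENNReal.toReal_nonneg]
    congr 1
    push_cast
    field_simp
  rw [hv2]
  have h1 : IW.toReal ^ (1/r) ≤ IW.toReal ^ (1/r) + 1 := by linarith
  calc IW.toReal ^ (1/r) * (Iv.toReal ^ (1/q) * (Iu.toReal ^ (1/(2*q)) * Iw.toReal ^ (1/(2*q))))
      = IW.toReal ^ (1/r) * Iv.toReal ^ (1/q) * Iu.toReal ^ (1/(2*q)) * Iw.toReal ^ (1/(2*q)) := by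
        ring
    _ ≤ (IW.toReal ^ (1/r) + 1) * Iv.toReal ^ (1/q) * Iu.toReal ^ (1/(2*q))
          * Iw.toReal ^ (1/(2*q)) := by
        gcongr <;> positivity
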